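/- arXiv:2009.14557 — 5 statements merged into one kernel-verified Lean document; each statement's English description precedes it below -/
import Mathlib

section
/- If I is a tropical ideal in the Laurent tropical polynomial semiring (min-plus semiring over ℝ ∪ {∞}) in n variables, then its intersection with the tropical polynomial semiring ℝ̄[x₁,…,xₙ] is also a tropical ideal, i.e., it satisfies the monomial elimination axiom. -/
open scoped Classical
open Filter

noncomputable section

namespace TropStmt

/-- The tropical semiring of coefficients: `ℝ ∪ {∞}`, with `⊕ = min` and `⊙ = +`. -/
abbrev TR : Type := WithTop ℝ

/-- A tropical polynomial with monomials indexed by `M`, given by its coefficient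
function.  The coefficient `⊤ = ∞` means the monomial does not occur. -/
abbrev TPoly (M : Type) : Type := M → TR

section Generic

variable {M : Type} [AddCommMonoid M]

/-- The support of a tropical polynomial: monomials with coefficient `≠ ∞`. -/
def psupp (f : TPoly M) : Set M := {u | f u ≠ ⊤}

/-- The zero tropical polynomial (all coefficients `∞`). -/
def zeroPoly (M : Type) : TPoly M := fun _ => ⊤

/-- Tropical addition of polynomials: coefficientwise minimum. -/
def tadd (f g : TPoly M) : TPoly M := fun u => min (f u) (g u)

/-- Tropical multiplication of a polynomial `f` by the term `c ⊙ x^v`. -/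
def tmulTerm (c : TR) (v : M) (f : TPoly M) : TPoly M :=
  fun u => if h : ∃ t : M, t + v = u then c + f h.choose else ⊤

/-- An ideal in the semiring of tropical polynomials (with finite supports):
closed under tropical addition and multiplication by terms. -/
def IsTIdeal (I : Set (TPoly M)) : Prop :=
  (∀ f ∈ I, (psupp f).Finite) ∧ zeroPoly M ∈ I ∧
    (∀ f ∈ I, ∀ g ∈ I, tadd f g ∈ I) ∧
    ∀ f ∈ I, ∀ (c : TR) (v : M), tmulTerm c v f ∈ I

/-- `Elim h f g u`: `h` is an elimination of the monomial `x^u` from `f` and `g`: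
`[h]_u = ∞`, `[h]_v ≥ min([f]_v, [g]_v)` for all `v`, with equality whenever
`[f]_v ≠ [g]_v`. -/
def Elim (h f g : TPoly M) (u : M) : Prop :=
  h u = ⊤ ∧ ∀ v : M, min (f v) (g v) ≤ h v ∧ (f v ≠ g v → h v = min (f v) (g v))

/-- A tropical ideal: an ideal satisfying the monomial elimination axiom. -/
def IsTropIdeal (I : Set (TPoly M)) : Prop :=
  IsTIdeal I ∧
    ∀ f ∈ I, ∀ g ∈ I, ∀ u : M, f u = g u → f u ≠ ⊤ → ∃ h ∈ I, Elim h f g u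

/-- The ideal generated by a set of tropical polynomials. -/
def idealGen (S : Set (TPoly M)) : Set (TPoly M) := ⋂₀ {I | IsTIdeal I ∧ S ⊆ I}

/-- The monomial `x^u` (as a tropical polynomial, with coefficient `0`). -/
def monPoly (u : M) : TPoly M := fun v => if v = u then (0 : TR) else ⊤

end Generic

section Vars

variable {n m : ℕ}

/-- Embedding of polynomials into Laurent polynomials. -/
def embed (f : TPoly (Fin n → ℕ)) : TPoly (Fin n → ℤ) :=
  fun u => if h : ∃ v : Fin n → ℕ, (fun i => ((v i : ℤ))) = u then f h.choose else ⊤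

/-- Multiplication of a Laurent polynomial by the Laurent monomial `x^v`. -/
def shiftZ (v : Fin n → ℤ) (f : TPoly (Fin n → ℤ)) : TPoly (Fin n → ℤ) :=
  fun u => f (u - v)

/-- The ideal generated in the Laurent polynomial semiring by an ideal of the
polynomial semiring: its elements are the Laurent-monomial multiples `x^v ⊙ f`, `f ∈ I`. -/
def Lext (I : Set (TPoly (Fin n → ℕ))) : Set (TPoly (Fin n → ℤ)) :=
  {g | ∃ f ∈ I, ∃ v : Fin n → ℤ, g = shiftZ v (embed f)}

/-- The intersection of a Laurent ideal with the polynomial subsemiring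
`ℝ̄[x₁,…,xₙ]`, viewed as a set of (ℕ-exponent) polynomials. -/
def restrictPoly (I : Set (TPoly (Fin n → ℤ))) : Set (TPoly (Fin n → ℕ)) :=
  {f | embed f ∈ I}

def dotZ (w : Fin n → ℝ) (u : Fin n → ℤ) : ℝ := ∑ i, w i * (u i : ℝ)

def dotN (w : Fin n → ℝ) (u : Fin n → ℕ) : ℝ := ∑ i, w i * (u i : ℝ)

/-- `attainsZ w f u`: the monomial `u` occurs in `f` and attains the minimum in the
tropical evaluation of `f` at `w`. -/
def attainsZ (w : Fin n → ℝ) (f : TPoly (Fin n → ℤ)) (u : Fin n → ℤ) : Prop :=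
  f u ≠ ⊤ ∧ ∀ v : Fin n → ℤ, f u + ((dotZ w u : ℝ) : TR) ≤ f v + ((dotZ w v : ℝ) : TR)

def attainsN (w : Fin n → ℝ) (f : TPoly (Fin n → ℕ)) (u : Fin n → ℕ) : Prop :=
  f u ≠ ⊤ ∧ ∀ v : Fin n → ℕ, f u + ((dotN w u : ℝ) : TR) ≤ f v + ((dotN w v : ℝ) : TR)

/-- The support of the initial form `in_w(f)` of a Laurent polynomial, a Boolean
polynomial represented by its set of monomials. -/
def inSuppZ (w : Fin n → ℝ) (f : TPoly (Fin n → ℤ)) : Set (Fin n → ℤ) := {u | attainsZ w f u}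

def inSuppN (w : Fin n → ℝ) (f : TPoly (Fin n → ℕ)) : Set (Fin n → ℕ) := {u | attainsN w f u}

/-- The initial ideal `in_w(I)` of a Laurent tropical ideal, represented as the set of
supports of the (Boolean) initial forms of elements of `I`. -/
def inIdealZ (I : Set (TPoly (Fin n → ℤ))) (w : Fin n → ℝ) : Set (Set (Fin n → ℤ)) :=
  {S | ∃ f ∈ I, S = inSuppZ w f}

def inIdealN (I : Set (TPoly (Fin n → ℕ))) (w : Fin n → ℝ) : Set (Set (Fin n → ℕ)) :=
  {S | ∃ f ∈ I, S = inSuppN w f}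

/-- The tropical variety of a Laurent tropical ideal: points where every nonzero
element attains its minimum at least twice. -/
def trvarietyZ (I : Set (TPoly (Fin n → ℤ))) : Set (Fin n → ℝ) :=
  {w | ∀ f ∈ I, (∀ u, f u = ⊤) ∨ ∃ u v, u ≠ v ∧ attainsZ w f u ∧ attainsZ w f v}

/-- `attainsB w S u`: in the Boolean polynomial with support `S`, the monomial `u`
attains the minimum at `w`. -/
def attainsB (w : Fin n → ℝ) (S : Set (Fin n → ℤ)) (u : Fin n → ℤ) : Prop :=
  u ∈ S ∧ ∀ v ∈ S, dotZ w u ≤ dotZ w v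

/-- Support of the initial form of a Boolean polynomial (given by its support `S`). -/
def inSuppB (w : Fin n → ℝ) (S : Set (Fin n → ℤ)) : Set (Fin n → ℤ) := {u | attainsB w S u}

/-- Variety of a Boolean (support-set) ideal. -/
def BvarietyZ (J : Set (Set (Fin n → ℤ))) : Set (Fin n → ℝ) :=
  {w | ∀ S ∈ J, S = ∅ ∨ ∃ u v, u ≠ v ∧ attainsB w S u ∧ attainsB w S v}

/-- A monomial term order on `ℝ̄[x₁,…,xₙ]` (as a strict order relation `r`, where
`r u v` means `x^u ≺ x^v`).  Note `x^0 = 1` is the largest monomial. -/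
structure IsTermOrder (n : ℕ) (r : (Fin n → ℕ) → (Fin n → ℕ) → Prop) : Prop where
  irrefl : ∀ u, ¬ r u u
  trans : ∀ u v w, r u v → r v w → r u w
  total : ∀ u v, u ≠ v → r u v ∨ r v u
  add_invariant : ∀ u v t, r u v → r (u + t) (v + t)
  lt_one : ∀ u, u ≠ 0 → r u 0

/-- `u` is the `r`-initial monomial of `f`: the `r`-smallest monomial in the support. -/
def isInitialMon (r : (Fin n → ℕ) → (Fin n → ℕ) → Prop) (f : TPoly (Fin n → ℕ))
    (u : Fin n → ℕ) : Prop :=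
  f u ≠ ⊤ ∧ ∀ v, f v ≠ ⊤ → v ≠ u → r u v

/-- The set of monomials of the monomial initial ideal `in_≺(I)`: all monomial
multiples of initial monomials of elements of `I`. -/
def monInitialSet (r : (Fin n → ℕ) → (Fin n → ℕ) → Prop) (I : Set (TPoly (Fin n → ℕ))) :
    Set (Fin n → ℕ) :=
  {u | ∃ g ∈ I, ∃ v, isInitialMon r g v ∧ ∃ t, u = v + t}

/-- Total degree of a monomial. -/
def totdeg (u : Fin m → ℕ) : ℕ := ∑ i, u i

/-- `E` is an independent set for (the matroids of) `I`: it does not contain the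
support of any nonzero polynomial of `I`. -/
def indepFinset (I : Set (TPoly (Fin m → ℕ))) (E : Finset (Fin m → ℕ)) : Prop :=
  ∀ f ∈ I, (∃ u, f u ≠ ⊤) → ¬ (psupp f ⊆ ↑E)

/-- `hilbAt I d N`: the Hilbert function of the homogeneous tropical ideal `I` takes
the value `N` at degree `d`, i.e. `N` is the maximum size of a set of degree-`d`
monomials not containing the support of any polynomial of `I`. -/
def hilbAt (I : Set (TPoly (Fin m → ℕ))) (d N : ℕ) : Prop :=
  (∃ E : Finset (Fin m → ℕ), (∀ u ∈ E, totdeg u = d) ∧ indepFinset I E ∧ E.card = N) ∧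
    ∀ E : Finset (Fin m → ℕ), (∀ u ∈ E, totdeg u = d) → indepFinset I E → E.card ≤ N

/-- The degree-`d` homogeneous part of a tropical polynomial. -/
def homPart (f : TPoly (Fin m → ℕ)) (d : ℕ) : TPoly (Fin m → ℕ) :=
  fun u => if totdeg u = d then f u else ⊤

/-- A homogeneous tropical ideal. -/
def IsHomogTropIdeal (I : Set (TPoly (Fin m → ℕ))) : Prop :=
  IsTropIdeal I ∧ ∀ f ∈ I, ∀ d : ℕ, homPart f d ∈ I

/-- The (total) degree of a tropical polynomial. -/
def polyDeg (f : TPoly (Fin m → ℕ)) : ℕ := sSup (totdeg '' psupp f)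

/-- The homogenization of a tropical polynomial, using a new variable `x₀`. -/
def homogenize (f : TPoly (Fin m → ℕ)) : TPoly (Fin (m + 1) → ℕ) :=
  fun v => if v 0 + totdeg (fun i : Fin m => v i.succ) = polyDeg f
    then f (fun i : Fin m => v i.succ) else ⊤

/-- The homogenization of a tropical ideal. -/
def homogIdeal (I : Set (TPoly (Fin m → ℕ))) : Set (TPoly (Fin (m + 1) → ℕ)) :=
  idealGen (homogenize '' I)

/-- `dimAgrees I p`: `p` is the Hilbert polynomial of the homogenization of `I`,
i.e. the Hilbert function of `I^h` eventually agrees with `p`.  The dimension of the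
tropical ideal `I` is the degree of such a `p`. -/
def dimAgrees (I : Set (TPoly (Fin m → ℕ))) (p : Polynomial ℝ) : Prop :=
  ∀ᶠ d in atTop, ∃ N : ℕ, hilbAt (homogIdeal I) d N ∧ (N : ℝ) = p.eval (d : ℝ)

/-- Specialization of the last variable `x_{n+1} = a` of a tropical polynomial. -/
def specLast (a : ℝ) (f : TPoly (Fin (n + 1) → ℕ)) : TPoly (Fin n → ℕ) :=
  fun u => sInf {t : TR | ∃ k : ℕ, t = f (Fin.snoc u k) + k • ((a : ℝ) : TR)}

/-- Specialization of the `y`-variables at a point `a ∈ ℝ̄^m`. -/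
def specializeY (a : Fin m → TR) (f : TPoly ((Fin n → ℕ) × (Fin m → ℕ))) :
    TPoly (Fin n → ℕ) :=
  fun u => sInf {t : TR | ∃ v : Fin m → ℕ, t = f (u, v) + ∑ i, v i • a i}

/-- Dehomogenization: substitute `x₀ = 0` (the tropical multiplicative unit). -/
def dehom (f : TPoly (Fin (n + 1) → ℕ)) : TPoly (Fin n → ℕ) :=
  fun u => sInf {t : TR | ∃ k : ℕ, t = f (Fin.cons k u)}

/-- The trivialization of a tropical polynomial: all finite coefficients become `0`. -/
def phiBool (f : TPoly (Fin (n + 1) → ℕ)) : TPoly (Fin (n + 1) → ℕ) :=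
  fun u => if f u = ⊤ then (⊤ : TR) else 0

/-- Independence of a finite set of Laurent monomials relative to a Laurent ideal. -/
def LindepFinset (I : Set (TPoly (Fin n → ℤ))) (E : Finset (Fin n → ℤ)) : Prop :=
  ∀ f ∈ I, (∃ u, f u ≠ ⊤) → ¬ (psupp f ⊆ ↑E)

/-- `LdegIs I d`: the zero-dimensional Laurent tropical ideal `I` has degree `d`:
`d` is the maximal size of a finite set of monomials not containing the support
of any nonzero element of `I`. -/
def LdegIs (I : Set (TPoly (Fin n → ℤ))) (d : ℕ) : Prop :=
  (∃ E : Finset (Fin n → ℤ), LindepFinset I E ∧ E.card = d) ∧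
    ∀ E : Finset (Fin n → ℤ), LindepFinset I E → E.card ≤ d

/-- A Laurent tropical ideal is zero-dimensional if the sizes of independent sets of
monomials are bounded. -/
def IsZeroDimL (I : Set (TPoly (Fin n → ℤ))) : Prop :=
  ∃ N : ℕ, ∀ E : Finset (Fin n → ℤ), LindepFinset I E → E.card ≤ N

def BindepFinset (J : Set (Set (Fin n → ℤ))) (E : Finset (Fin n → ℤ)) : Prop :=
  ∀ S ∈ J, S.Nonempty → ¬ (S ⊆ ↑E)

/-- Degree of a zero-dimensional Boolean (support-set) ideal. -/
def BdegIs (J : Set (Set (Fin n → ℤ))) (d : ℕ) : Prop :=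
  (∃ E : Finset (Fin n → ℤ), BindepFinset J E ∧ E.card = d) ∧
    ∀ E : Finset (Fin n → ℤ), BindepFinset J E → E.card ≤ d

/-- A Laurent monomial `u` has degree zero for the grading induced by the subspace `L`. -/
def degZero (L : Submodule ℝ (Fin n → ℝ)) (u : Fin n → ℤ) : Prop :=
  ∀ v ∈ L, (∑ i, v i * (u i : ℝ)) = 0

/-- Degree of the degree-zero part (for the grading induced by `L`) of a Boolean
support-set ideal `J`: the maximal size of a finite set of degree-zero monomials not
containing the support of any nonempty element of the degree-zero part of `J`. -/
def Bdeg0Is (J : Set (Set (Fin n → ℤ))) (L : Submodule ℝ (Fin n → ℝ)) (d : ℕ) : Prop :=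
  (∃ E : Finset (Fin n → ℤ), (∀ u ∈ E, degZero L u) ∧
      (∀ S ∈ J, (∀ u ∈ S, degZero L u) → S.Nonempty → ¬ (S ⊆ ↑E)) ∧ E.card = d) ∧
    ∀ E : Finset (Fin n → ℤ), (∀ u ∈ E, degZero L u) →
      (∀ S ∈ J, (∀ u ∈ S, degZero L u) → S.Nonempty → ¬ (S ⊆ ↑E)) → E.card ≤ d

/-- An `ℝ`-rational polyhedron: defined by finitely many inequalities with integral
normal vectors and real constants. -/
def IsRatPolyhedron (P : Set (Fin n → ℝ)) : Prop :=
  ∃ (k : ℕ) (a : Fin k → Fin n → ℤ) (b : Fin k → ℝ),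
    P = {x | ∀ i, (∑ j, (a i j : ℝ) * x j) ≤ b i}

/-- `F` is a face of the polyhedron `P`. -/
def IsFaceOf (F P : Set (Fin n → ℝ)) : Prop :=
  F = P ∨ ∃ (a : Fin n → ℝ) (b : ℝ), (∀ x ∈ P, (∑ i, a i * x i) ≤ b) ∧
    F = {x | x ∈ P ∧ (∑ i, a i * x i) = b}

/-- The linear span of the directions of a subset of `ℝⁿ`. -/
def spanDirs (σ : Set (Fin n → ℝ)) : Submodule ℝ (Fin n → ℝ) :=
  Submodule.span ℝ {y | ∃ p ∈ σ, ∃ q ∈ σ, y = p - q}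

/-- The dimension of a polyhedron. -/
def pdim (σ : Set (Fin n → ℝ)) : ℕ := Module.finrank ℝ (spanDirs σ)

/-- `u ∈ ℤⁿ` is primitive modulo the subspace `L`: it is a first lattice point, i.e.
nonzero and not a `k`-th multiple (`k ≥ 2`) of a lattice vector modulo `L`. -/
def PrimitiveMod (L : Submodule ℝ (Fin n → ℝ)) (u : Fin n → ℤ) : Prop :=
  (fun i => (u i : ℝ)) ∉ L ∧
    ∀ k : ℕ, 2 ≤ k → ∀ v : Fin n → ℤ, (fun i => (u i : ℝ) - (k : ℝ) * (v i : ℝ)) ∉ L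

/-- `hasDisk S d`: `S` contains a `d`-dimensional disk around some point. -/
def hasDisk (S : Set (Fin n → ℝ)) (d : ℕ) : Prop :=
  ∃ (x : Fin n → ℝ) (W : Submodule ℝ (Fin n → ℝ)), Module.finrank ℝ W = d ∧
    ∃ ε > (0 : ℝ), ∀ y ∈ W, ‖y‖ < ε → x + y ∈ S

/-- The monomial map `φ* : x^u ↦ y^{Au}` on Laurent tropical polynomials. -/
def phiMap (A : Matrix (Fin n) (Fin n) ℤ) (f : TPoly (Fin n → ℤ)) : TPoly (Fin n → ℤ) :=
  fun v => if h : ∃ u : Fin n → ℤ, A.mulVec u = v then f h.choose else ⊤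

end Vars

section Product

variable {n m : ℕ}

def attainsP (x : (Fin n → ℝ) × (Fin m → ℝ)) (f : TPoly ((Fin n → ℤ) × (Fin m → ℤ)))
    (p : (Fin n → ℤ) × (Fin m → ℤ)) : Prop :=
  f p ≠ ⊤ ∧ ∀ q : (Fin n → ℤ) × (Fin m → ℤ),
    f p + ((dotZ x.1 p.1 + dotZ x.2 p.2 : ℝ) : TR) ≤ f q + ((dotZ x.1 q.1 + dotZ x.2 q.2 : ℝ) : TR)

def trvarietyP (I : Set (TPoly ((Fin n → ℤ) × (Fin m → ℤ)))) :
    Set ((Fin n → ℝ) × (Fin m → ℝ)) :=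
  {x | ∀ f ∈ I, (∀ p, f p = ⊤) ∨ ∃ p q, p ≠ q ∧ attainsP x f p ∧ attainsP x f q}

end Product

section Univariate

def attains1 (x : ℝ) (f : TPoly ℤ) (u : ℤ) : Prop :=
  f u ≠ ⊤ ∧ ∀ v : ℤ, f u + (((u : ℝ) * x : ℝ) : TR) ≤ f v + (((v : ℝ) * x : ℝ) : TR)

def inSupp1 (x : ℝ) (f : TPoly ℤ) : Set ℤ := {u | attains1 x f u}

def trvariety1 (I : Set (TPoly ℤ)) : Set ℝ :=
  {x | ∀ f ∈ I, (∀ u, f u = ⊤) ∨ ∃ u v, u ≠ v ∧ attains1 x f u ∧ attains1 x f v}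

/-- The variety of a single univariate Laurent tropical polynomial. -/
def Vf (h : TPoly ℤ) : Set ℝ :=
  {x | (∀ u, h u = ⊤) ∨ ∃ u v, u ≠ v ∧ attains1 x h u ∧ attains1 x h v}

/-- Evaluation of a univariate Laurent tropical polynomial at `x ∈ ℝ`. -/
def eval1 (f : TPoly ℤ) (x : ℝ) : TR := sInf {t : TR | ∃ u : ℤ, t = f u + (((u : ℝ) * x : ℝ) : TR)}

/-- `g` is the convexification of `f`: it defines the same function and has the
(pointwise) minimal coefficients among all such polynomials. -/
def IsLConv (f g : TPoly ℤ) : Prop :=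
  (∀ x : ℝ, eval1 g x = eval1 f x) ∧
    ∀ h : TPoly ℤ, (∀ x : ℝ, eval1 h x = eval1 f x) → ∀ u, g u ≤ h u

/-- Tropical multiplication of univariate Laurent polynomials. -/
def pmulZ (f g : TPoly ℤ) : TPoly ℤ :=
  fun u => sInf {t : TR | ∃ i j : ℤ, i + j = u ∧ t = f i + g j}

def unit1 : TPoly ℤ := monPoly (0 : ℤ)

def powZ (f : TPoly ℤ) : ℕ → TPoly ℤ
  | 0 => unit1
  | (k + 1) => pmulZ f (powZ f k)

/-- The linear tropical polynomial `x ⊕ w`. -/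
def lin1 (w : ℝ) : TPoly ℤ :=
  fun u => if u = 0 then ((w : ℝ) : TR) else if u = 1 then (0 : TR) else ⊤

/-- Tropical divisibility of univariate Laurent polynomials. -/
def LDvd (f g : TPoly ℤ) : Prop := ∃ q : TPoly ℤ, (psupp q).Finite ∧ g = pmulZ f q

/-- `in_w(f)` is a Boolean polynomial lying in `𝔹[x]` of degree `m`. -/
def goodAt (x : ℝ) (f : TPoly ℤ) (m : ℕ) : Prop :=
  (m : ℤ) ∈ inSupp1 x f ∧ ∀ u ∈ inSupp1 x f, 0 ≤ u ∧ u ≤ (m : ℤ)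

/-- The multiplicity of `V(I)` at `x`: the smallest degree of a Boolean polynomial in
`in_x(I) ∩ 𝔹[x]`. -/
def idealMult1 (I : Set (TPoly ℤ)) (x : ℝ) (m : ℕ) : Prop :=
  (∃ f ∈ I, goodAt x f m) ∧ ∀ f ∈ I, ∀ m' : ℕ, goodAt x f m' → m ≤ m'

/-- The multiplicity of a univariate tropical polynomial `h` at `w`: the exponent of
the factor `(x ⊕ w)` in the factorization of the convexification of `h`. -/
def polyMult1 (h : TPoly ℤ) (w : ℝ) (m : ℕ) : Prop :=
  ∃ ch : TPoly ℤ, IsLConv h ch ∧ LDvd (powZ (lin1 w) m) ch ∧ ¬ LDvd (powZ (lin1 w) (m + 1)) ch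

end Univariate

end TropStmt

namespace TropAux

open TropStmt

variable {n : ℕ}

def kappa (v : Fin n → ℕ) : Fin n → ℤ := fun i => (v i : ℤ)

lemma kappa_inj : Function.Injective (kappa (n := n)) := by
  intro a b h
  funext i
  have := congrFun h i
  simpa [kappa] using this

lemma kappa_add (a b : Fin n → ℕ) : kappa (a + b) = kappa a + kappa b := by
  funext i; simp [kappa]

lemma embed_coe (f : TPoly (Fin n → ℕ)) (v : Fin n → ℕ) :
    embed f (kappa v) = f v := by
  have h : ∃ w : Fin n → ℕ, (fun i => ((w i : ℤ))) = kappa v := ⟨v, rfl⟩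
  simp only [embed, dif_pos h]
  congr 1
  exact kappa_inj h.choose_spec

lemma embed_not (f : TPoly (Fin n → ℕ)) (u : Fin n → ℤ)
    (hu : ∀ v : Fin n → ℕ, kappa v ≠ u) : embed f u = ⊤ := by
  apply dif_neg
  rintro ⟨v, hv⟩
  exact hu v hv

lemma tmulTerm_add {M : Type} [AddCancelCommMonoid M] (c : TR) (v : M) (f : TPoly M) (t : M) :
    tmulTerm c v f (t + v) = c + f t := by
  have h : ∃ s : M, s + v = t + v := ⟨t, rfl⟩
  simp only [tmulTerm, dif_pos h]
  congr 2
  exact add_right_cancel h.choose_spec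

lemma tmulTerm_not {M : Type} [AddCommMonoid M] (c : TR) (v : M) (f : TPoly M) (u : M)
    (h : ¬ ∃ t : M, t + v = u) : tmulTerm c v f u = ⊤ := dif_neg h

lemma embed_zero : embed (zeroPoly (Fin n → ℕ)) = zeroPoly (Fin n → ℤ) := by
  funext u
  by_cases h : ∃ v : Fin n → ℕ, (fun i => ((v i : ℤ))) = u <;>
    simp [embed, zeroPoly, h]

lemma embed_tadd (f g : TPoly (Fin n → ℕ)) :
    embed (tadd f g) = tadd (embed f) (embed g) := by
  funext u
  by_cases hr : ∃ v : Fin n → ℕ, kappa v = u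
  · obtain ⟨v, rfl⟩ := hr
    show embed (tadd f g) (kappa v) = min (embed f (kappa v)) (embed g (kappa v))
    rw [embed_coe, embed_coe, embed_coe]; rfl
  · push_neg at hr
    show embed (tadd f g) u = min (embed f u) (embed g u)
    rw [embed_not _ _ hr, embed_not _ _ hr, embed_not _ _ hr, min_self]

lemma embed_tmul (c : TR) (v : Fin n → ℕ) (f : TPoly (Fin n → ℕ)) :
    embed (tmulTerm c v f) = tmulTerm c (kappa v) (embed f) := by
  funext u
  by_cases hr : ∃ w : Fin n → ℕ, kappa w = u
  · obtain ⟨w, rfl⟩ := hr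
    rw [embed_coe]
    by_cases he : ∃ t : Fin n → ℕ, t + v = w
    · obtain ⟨t, rfl⟩ := he
      rw [tmulTerm_add, kappa_add, tmulTerm_add, embed_coe]
    · rw [tmulTerm_not _ _ _ _ he]
      have hz : ∃ s : Fin n → ℤ, s + kappa v = kappa w := ⟨kappa w - kappa v, sub_add_cancel _ _⟩
      simp only [tmulTerm, dif_pos hz]
      rw [embed_not f hz.choose]
      · exact (add_top c).symm
      · intro x hx
        apply he
        refine ⟨x, kappa_inj ?_⟩
        rw [kappa_add, hx, hz.choose_spec]
  · push_neg at hr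
    rw [embed_not _ _ hr]
    have hz : ∃ s : Fin n → ℤ, s + kappa v = u := ⟨u - kappa v, sub_add_cancel _ _⟩
    simp only [tmulTerm, dif_pos hz]
    rw [embed_not f hz.choose]
    · exact (add_top c).symm
    · intro x hx
      apply hr (x + v)
      rw [kappa_add, hx, hz.choose_spec]

end TropAux

theorem intersection_with_polynomial_semiring_isTropicalIdeal
    (n : ℕ) (I : Set (TropStmt.TPoly (Fin n → ℤ))) (hI : TropStmt.IsTropIdeal I) :
    TropStmt.IsTropIdeal (TropStmt.restrictPoly I) := by
  open TropStmt TropAux in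
  constructor
  · refine ⟨?_, ?_, ?_, ?_⟩
    · intro f hf
      have hfin := hI.1.1 (embed f) hf
      have hsub : psupp f ⊆ kappa ⁻¹' (psupp (embed f)) := by
        intro v hv
        simp only [Set.mem_preimage, psupp, Set.mem_setOf_eq, embed_coe]
        exact hv
      exact Set.Finite.subset (hfin.preimage kappa_inj.injOn) hsub
    · show embed (zeroPoly (Fin n → ℕ)) ∈ I
      rw [embed_zero]; exact hI.1.2.1
    · intro f hf g hg
      show embed (tadd f g) ∈ I
      rw [embed_tadd]; exact hI.1.2.2.1 _ hf _ hg
    · intro f hf c v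
      show embed (tmulTerm c v f) ∈ I
      rw [embed_tmul]; exact hI.1.2.2.2 _ hf c (kappa v)
  · intro f hf g hg u hfg hft
    obtain ⟨h, hhI, hh1, hh2⟩ := hI.2 (embed f) hf (embed g) hg (kappa u)
      (by rw [embed_coe, embed_coe]; exact hfg)
      (by rw [embed_coe]; exact hft)
    have hout : ∀ z : Fin n → ℤ, (∀ v : Fin n → ℕ, kappa v ≠ z) → h z = ⊤ := by
      intro z hz
      have hle := (hh2 z).1
      rw [embed_not f z hz, embed_not g z hz, min_self] at hle
      exact top_le_iff.mp hle
    refine ⟨fun v => h (kappa v), ?_, hh1, ?_⟩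
    · show embed (fun v => h (kappa v)) ∈ I
      have heq : embed (fun v => h (kappa v)) = h := by
        funext z
        by_cases hr : ∃ v : Fin n → ℕ, kappa v = z
        · obtain ⟨v, rfl⟩ := hr
          exact embed_coe _ v
        · push_neg at hr
          rw [embed_not _ _ hr, hout z hr]
      rw [heq]; exact hhI
    · intro v
      have := hh2 (kappa v)
      rw [embed_coe, embed_coe] at this
      exact this
end
end

section
/- If I ⊆ ℝ̄[x₁,…,xₙ] is a tropical ideal, then the ideal I·ℝ̄[x₁^{±1},…,xₙ^{±1}] it generates in the Laurent tropical polynomial semiring is also a tropical ideal. -/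
open scoped Classical
open Filter

noncomputable section

namespace LaurentProof

open TropStmt

variable {n : ℕ}

/-- Coercion of exponent vectors. -/
def ι (v : Fin n → ℕ) : Fin n → ℤ := fun i => (v i : ℤ)

lemma ι_inj : Function.Injective (ι (n := n)) := by
  intro a b h
  funext i
  have h2 := congrFun h i
  simp only [ι] at h2
  exact_mod_cast h2

lemma ι_add (a b : Fin n → ℕ) : ι (a + b) = ι a + ι b := by
  funext i
  simp [ι]

lemma embed_ι (f : TPoly (Fin n → ℕ)) (v : Fin n → ℕ) : embed f (ι v) = f v := by
  unfold embed
  have h : ∃ w : Fin n → ℕ, (fun i => ((w i : ℤ))) = ι v := ⟨v, rfl⟩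
  rw [dif_pos h]
  exact congrArg f (ι_inj h.choose_spec)

lemma embed_not (f : TPoly (Fin n → ℕ)) (u : Fin n → ℤ)
    (h : ¬ ∃ v : Fin n → ℕ, ι v = u) : embed f u = ⊤ :=
  dif_neg h

lemma tmulTerm_apply_add {M : Type} [AddCancelCommMonoid M]
    (c : TR) (v : M) (f : TPoly M) (s : M) :
    tmulTerm c v f (s + v) = c + f s := by
  unfold tmulTerm
  have h : ∃ t : M, t + v = s + v := ⟨s, rfl⟩
  rw [dif_pos h]
  exact congrArg (fun x => c + f x) (add_right_cancel h.choose_spec)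

lemma tmulTerm_apply_not {M : Type} [AddCommMonoid M]
    (c : TR) (v : M) (f : TPoly M) (u : M) (h : ¬ ∃ t : M, t + v = u) :
    tmulTerm c v f u = ⊤ :=
  dif_neg h

lemma tmulTerm_zero {M : Type} [AddCancelCommMonoid M]
    (c : TR) (f : TPoly M) : tmulTerm c 0 f = fun u => c + f u := by
  funext u
  have := tmulTerm_apply_add c (0 : M) f u
  rwa [add_zero] at this

lemma tmulTerm_group (c : TR) (v : Fin n → ℤ) (f : TPoly (Fin n → ℤ)) (u : Fin n → ℤ) :
    tmulTerm c v f u = c + f (u - v) := by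
  have : u - v + v = u := sub_add_cancel u v
  have h := tmulTerm_apply_add c v f (u - v)
  rwa [this] at h

lemma shiftZ_apply (v : Fin n → ℤ) (f : TPoly (Fin n → ℤ)) (u : Fin n → ℤ) :
    shiftZ v f u = f (u - v) := rfl

lemma shiftZ_shiftZ (a b : Fin n → ℤ) (f : TPoly (Fin n → ℤ)) :
    shiftZ a (shiftZ b f) = shiftZ (a + b) f := by
  funext u
  simp only [shiftZ, sub_sub]

/-- Key lemma A: embedding commutes with monomial shift. -/
lemma embed_tmulTerm (t : Fin n → ℕ) (f : TPoly (Fin n → ℕ)) :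
    embed (tmulTerm 0 t f) = shiftZ (ι t) (embed f) := by
  funext u
  rw [shiftZ_apply]
  by_cases h : ∃ s : Fin n → ℕ, ι s = u
  · obtain ⟨s, rfl⟩ := h
    rw [embed_ι]
    by_cases hr : ∃ r : Fin n → ℕ, r + t = s
    · obtain ⟨r, rfl⟩ := hr
      rw [tmulTerm_apply_add, ι_add, add_sub_cancel_right, embed_ι, zero_add]
    · rw [tmulTerm_apply_not _ _ _ _ hr, embed_not]
      rintro ⟨r, hr2⟩
      exact hr ⟨r, ι_inj (by rw [ι_add, hr2, sub_add_cancel])⟩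
  · rw [embed_not _ _ h, embed_not]
    rintro ⟨r, hr⟩
    exact h ⟨r + t, by rw [ι_add, hr, sub_add_cancel]⟩

/-- Key lemma B: embedding commutes with tropical addition. -/
lemma embed_tadd (f g : TPoly (Fin n → ℕ)) :
    embed (tadd f g) = tadd (embed f) (embed g) := by
  funext u
  by_cases h : ∃ s : Fin n → ℕ, ι s = u
  · obtain ⟨s, rfl⟩ := h
    simp only [embed_ι, tadd]
  · simp only [tadd, embed_not _ _ h]
    simp

lemma shiftZ_tadd (w : Fin n → ℤ) (f g : TPoly (Fin n → ℤ)) :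
    shiftZ w (tadd f g) = tadd (shiftZ w f) (shiftZ w g) := rfl

lemma embed_zero : embed (zeroPoly (Fin n → ℕ)) = zeroPoly (Fin n → ℤ) := by
  funext u
  by_cases h : ∃ s : Fin n → ℕ, ι s = u
  · obtain ⟨s, rfl⟩ := h
    rw [embed_ι]; rfl
  · exact embed_not _ _ h

/-- Every element of `Lext I` can be written with a shift `w ≤` a given bound,
by absorbing the difference into the polynomial. -/
lemma shift_down (hI : IsTropIdeal I) {f : TPoly (Fin n → ℕ)} (hf : f ∈ I)
    (v w : Fin n → ℤ) (hw : ∀ i, w i ≤ v i) :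
    ∃ f' ∈ I, shiftZ v (embed f) = shiftZ w (embed f') := by
  set t : Fin n → ℕ := fun i => (v i - w i).toNat with ht
  have hιt : ι t = v - w := by
    funext i
    simp only [ι, ht, Pi.sub_apply]
    exact Int.toNat_of_nonneg (by linarith [hw i])
  refine ⟨tmulTerm 0 t f, hI.1.2.2.2 f hf 0 t, ?_⟩
  rw [embed_tmulTerm, shiftZ_shiftZ, hιt, show w + (v - w) = v from by abel]

lemma common_rep (hI : IsTropIdeal I) {g₁ g₂ : TPoly (Fin n → ℤ)}
    (h1 : g₁ ∈ Lext I) (h2 : g₂ ∈ Lext I) :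
    ∃ w : Fin n → ℤ, ∃ f₁ ∈ I, ∃ f₂ ∈ I,
      g₁ = shiftZ w (embed f₁) ∧ g₂ = shiftZ w (embed f₂) := by
  obtain ⟨p₁, hp₁, v₁, rfl⟩ := h1
  obtain ⟨p₂, hp₂, v₂, rfl⟩ := h2
  set w : Fin n → ℤ := fun i => min (v₁ i) (v₂ i) with hw
  obtain ⟨f₁, hf₁, e₁⟩ := shift_down hI hp₁ v₁ w (fun i => min_le_left _ _)
  obtain ⟨f₂, hf₂, e₂⟩ := shift_down hI hp₂ v₂ w (fun i => min_le_right _ _)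
  exact ⟨w, f₁, hf₁, f₂, hf₂, e₁, e₂⟩

lemma embed_const_add (c : TR) (f : TPoly (Fin n → ℕ)) :
    embed (fun u => c + f u) = fun x => c + embed f x := by
  funext x
  by_cases h : ∃ s : Fin n → ℕ, ι s = x
  · obtain ⟨s, rfl⟩ := h
    rw [embed_ι (fun u => c + f u) s, embed_ι]
  · rw [embed_not _ _ h, embed_not _ _ h, add_top]

end LaurentProof

theorem laurent_extension_isTropicalIdeal
    (n : ℕ) (I : Set (TropStmt.TPoly (Fin n → ℕ))) (hI : TropStmt.IsTropIdeal I) :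
    TropStmt.IsTropIdeal (TropStmt.Lext I) := by
  classical
  open TropStmt LaurentProof in
  refine ⟨⟨?_, ?_, ?_, ?_⟩, ?_⟩
  · -- finite supports
    rintro g ⟨f, hf, v, rfl⟩
    apply Set.Finite.subset ((hI.1.1 f hf).image (fun s => ι s + v))
    intro u hu
    simp only [psupp, Set.mem_setOf_eq, shiftZ_apply] at hu
    by_cases h : ∃ s : Fin n → ℕ, ι s = u - v
    · obtain ⟨s, hs⟩ := h
      rw [← hs, embed_ι] at hu
      exact ⟨s, hu, by show ι s + v = u; rw [hs, sub_add_cancel]⟩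
    · exact absurd (embed_not f _ h) hu
  · -- zero
    refine ⟨zeroPoly _, hI.1.2.1, 0, ?_⟩
    rw [embed_zero]
    funext u
    rfl
  · -- tadd
    intro g₁ h1 g₂ h2
    obtain ⟨w, f₁, hf₁, f₂, hf₂, rfl, rfl⟩ := common_rep hI h1 h2
    refine ⟨tadd f₁ f₂, hI.1.2.2.1 f₁ hf₁ f₂ hf₂, w, ?_⟩
    rw [embed_tadd, shiftZ_tadd]
  · -- tmulTerm
    rintro g ⟨f, hf, v, rfl⟩ c t
    refine ⟨tmulTerm c 0 f, hI.1.2.2.2 f hf c 0, t + v, ?_⟩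
    funext u
    rw [tmulTerm_group, shiftZ_apply, shiftZ_apply, tmulTerm_zero, embed_const_add,
      sub_sub]
  · -- elimination
    intro g₁ h1 g₂ h2 u hequ hne
    obtain ⟨w, f₁, hf₁, f₂, hf₂, rfl, rfl⟩ := common_rep hI h1 h2
    rw [shiftZ_apply] at hequ hne
    rw [shiftZ_apply] at hequ
    obtain ⟨s, hs⟩ : ∃ s : Fin n → ℕ, ι s = u - w := by
      by_contra h
      exact hne (embed_not f₁ _ h)
    rw [← hs, embed_ι, embed_ι] at hequ
    rw [← hs, embed_ι] at hne
    obtain ⟨h, hh, hHu, hHv⟩ := hI.2 f₁ hf₁ f₂ hf₂ s hequ hne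
    refine ⟨shiftZ w (embed h), ⟨h, hh, w, rfl⟩, ?_, ?_⟩
    · rw [shiftZ_apply, ← hs, embed_ι, hHu]
    · intro v
      simp only [shiftZ_apply]
      by_cases hr : ∃ r : Fin n → ℕ, ι r = v - w
      · obtain ⟨r, hr⟩ := hr
        rw [← hr, embed_ι, embed_ι, embed_ι]
        exact hHv r
      · rw [embed_not _ _ hr, embed_not _ _ hr, embed_not _ _ hr]
        exact ⟨by simp, fun hc => absurd rfl hc⟩
end
end

section
/- If I ⊆ ℝ̄[x₁,…,xₙ] is a tropical ideal and m is a monomial, then the colon ideal (I : m) = { f : m·f ∈ I } is a tropical ideal. -/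
open scoped Classical
open Filter

noncomputable section

namespace ColonAux
open TropStmt
variable {M : Type} [AddCancelCommMonoid M]

lemma tmul_add (c : TR) (v : M) (f : TPoly M) (t : M) :
    tmulTerm c v f (t + v) = c + f t := by
  have hex : ∃ s : M, s + v = t + v := ⟨t, rfl⟩
  simp only [tmulTerm, dif_pos hex]
  rw [show hex.choose = t from add_right_cancel hex.choose_spec]

lemma tmul_not (c : TR) (v : M) (f : TPoly M) (u : M)
    (h : ¬ ∃ t : M, t + v = u) : tmulTerm c v f u = ⊤ := dif_neg h

lemma tmul_zeroPoly (m : M) : tmulTerm (0 : TR) m (zeroPoly M) = zeroPoly M := by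
  funext u
  by_cases h : ∃ t : M, t + m = u
  · obtain ⟨t, rfl⟩ := h
    rw [tmul_add]; simp [zeroPoly]
  · rw [tmul_not _ _ _ _ h]; rfl

lemma tmul_tadd (m : M) (f g : TPoly M) :
    tmulTerm (0 : TR) m (tadd f g) = tadd (tmulTerm 0 m f) (tmulTerm 0 m g) := by
  funext u
  by_cases h : ∃ t : M, t + m = u
  · obtain ⟨t, rfl⟩ := h
    simp only [tadd, tmul_add, zero_add]
  · simp only [tadd, tmul_not _ _ _ _ h]
    rfl

lemma tmul_comm (c : TR) (v m : M) (f : TPoly M) :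
    tmulTerm (0 : TR) m (tmulTerm c v f) = tmulTerm c v (tmulTerm 0 m f) := by
  funext u
  by_cases h : ∃ t : M, t + v + m = u
  · obtain ⟨t, rfl⟩ := h
    have L : tmulTerm (0 : TR) m (tmulTerm c v f) (t + v + m) = 0 + (c + f t) := by
      rw [tmul_add, tmul_add]
    have R : tmulTerm c v (tmulTerm (0 : TR) m f) (t + v + m) = c + (0 + f t) := by
      rw [add_right_comm, tmul_add, tmul_add]
    rw [L, R, zero_add, zero_add]
  · have L : tmulTerm (0 : TR) m (tmulTerm c v f) u = ⊤ := by
      by_cases hs : ∃ s : M, s + m = u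
      · obtain ⟨s, rfl⟩ := hs
        have hns : ¬ ∃ t : M, t + v = s := fun ⟨t, ht⟩ => h ⟨t, by rw [ht]⟩
        rw [tmul_add, tmul_not _ _ _ _ hns, add_top]
      · exact tmul_not _ _ _ _ hs
    have R : tmulTerm c v (tmulTerm (0 : TR) m f) u = ⊤ := by
      by_cases hs : ∃ s : M, s + v = u
      · obtain ⟨s, rfl⟩ := hs
        have hns : ¬ ∃ t : M, t + m = s := fun ⟨t, ht⟩ =>
          h ⟨t, by rw [add_right_comm, ht]⟩
        rw [tmul_add, tmul_not _ _ _ _ hns, add_top]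
      · exact tmul_not _ _ _ _ hs
    rw [L, R]

theorem colon (I : Set (TPoly M)) (hI : IsTropIdeal I) (m : M) :
    IsTropIdeal {f | tmulTerm 0 m f ∈ I} := by
  obtain ⟨⟨hfin, hzero, hadd, hmul⟩, helim⟩ := hI
  refine ⟨⟨?_, ?_, ?_, ?_⟩, ?_⟩
  · intro f hf
    have hF := hfin _ hf
    have heq : psupp f = (fun t => t + m) ⁻¹' psupp (tmulTerm (0 : TR) m f) := by
      ext t
      simp only [psupp, Set.mem_setOf_eq, Set.mem_preimage, tmul_add, zero_add]
    rw [heq]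
    exact hF.preimage (fun a _ b _ hab => add_right_cancel hab)
  · show tmulTerm (0 : TR) m (zeroPoly M) ∈ I
    rw [tmul_zeroPoly]; exact hzero
  · intro f hf g hg
    show tmulTerm (0 : TR) m (tadd f g) ∈ I
    rw [tmul_tadd]; exact hadd _ hf _ hg
  · intro f hf c v
    show tmulTerm (0 : TR) m (tmulTerm c v f) ∈ I
    rw [tmul_comm]; exact hmul _ hf c v
  · intro f hf g hg u hfg hft
    have hFu : tmulTerm (0 : TR) m f (u + m) = tmulTerm (0 : TR) m g (u + m) := by
      rw [tmul_add, tmul_add, hfg]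
    have hFt : tmulTerm (0 : TR) m f (u + m) ≠ ⊤ := by
      rw [tmul_add, zero_add]; exact hft
    obtain ⟨h, hhI, hhu, hhv⟩ := helim _ hf _ hg (u + m) hFu hFt
    have htop : ∀ w, (¬ ∃ t : M, t + m = w) → h w = ⊤ := by
      intro w hw
      have hle := (hhv w).1
      rw [tmul_not _ _ _ _ hw, tmul_not _ _ _ _ hw] at hle
      simpa using hle
    refine ⟨fun t => h (t + m), ?_, ?_, ?_⟩
    · show tmulTerm (0 : TR) m (fun t => h (t + m)) ∈ I
      have : tmulTerm (0 : TR) m (fun t => h (t + m)) = h := by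
        funext w
        by_cases hw : ∃ t : M, t + m = w
        · obtain ⟨t, rfl⟩ := hw; rw [tmul_add, zero_add]
        · rw [tmul_not _ _ _ _ hw, htop w hw]
      rw [this]; exact hhI
    · exact hhu
    · intro v
      have h2 := hhv (v + m)
      rw [tmul_add, tmul_add, zero_add, zero_add] at h2
      exact h2

end ColonAux

theorem colon_ideal_isTropicalIdeal
    (n : ℕ) (I : Set (TropStmt.TPoly (Fin n → ℕ))) (hI : TropStmt.IsTropIdeal I)
    (m : Fin n → ℕ) :
    TropStmt.IsTropIdeal {f | TropStmt.tmulTerm 0 m f ∈ I} :=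
  ColonAux.colon I hI m
end
end

section
/- Let I ⊆ ℝ̄[x₀,…,xₙ] be a homogeneous tropical ideal and w ∈ ℝⁿ. Then the initial ideal of the dehomogenization of I at x₀ = 0 (tropical multiplicative identity) with respect to w equals the dehomogenization of the initial ideal of I with respect to (0, w): in_w(I|_{x₀=0}) = in_{(0,w)}(I)|_{x₀=0}. -/
open scoped Classical
open Filter

noncomputable section

namespace TropStmt

section DehomAux

variable {n : ℕ}

lemma dot_cons_zero (w : Fin n → ℝ) (v : Fin (n + 1) → ℕ) :
    dotN (Fin.cons (0 : ℝ) w) v = dotN w (Fin.tail v) := by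
  unfold dotN
  rw [Fin.sum_univ_succ]
  simp [Fin.tail]

lemma dot_cons_zero' (w : Fin n → ℝ) (k : ℕ) (u : Fin n → ℕ) :
    dotN (Fin.cons (0 : ℝ) w) (Fin.cons k u) = dotN w u := by
  rw [dot_cons_zero]
  simp [Fin.tail]

/-- The infimum defining `dehom` is attained when `f` has finite support. -/
lemma dehom_attained (f : TPoly (Fin (n + 1) → ℕ)) (hf : (psupp f).Finite)
    (u : Fin n → ℕ) :
    ∃ k : ℕ, dehom f u = f (Fin.cons k u) ∧
      ∀ k' : ℕ, f (Fin.cons k u) ≤ f (Fin.cons k' u) := by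
  classical
  set S : Set TR := {t : TR | ∃ k : ℕ, t = f (Fin.cons k u)} with hS
  have hSsub : S ⊆ insert (⊤ : TR) (f '' psupp f) := by
    rintro t ⟨k, rfl⟩
    by_cases h : f (Fin.cons k u) = ⊤
    · exact Or.inl h
    · exact Or.inr ⟨Fin.cons k u, h, rfl⟩
  have hSfin : S.Finite := Set.Finite.subset ((hf.image f).insert ⊤) hSsub
  have hSne : S.Nonempty := ⟨f (Fin.cons 0 u), 0, rfl⟩
  obtain ⟨m, hmS, hmin⟩ := Set.exists_min_image S id hSfin hSne
  have hbdd : BddBelow S := ⟨m, fun x hx => hmin x hx⟩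
  have hglb : IsGLB S (sInf S) := WithTop.isGLB_sInf' hbdd
  have hsinf : sInf S = m :=
    le_antisymm (hglb.1 hmS) (hglb.2 fun x hx => hmin x hx)
  obtain ⟨k, hk⟩ := hmS
  refine ⟨k, ?_, ?_⟩
  · show sInf S = f (Fin.cons k u)
    rw [hsinf, hk]
  · intro k'
    rw [← hk]
    exact hmin _ ⟨k', rfl⟩

lemma add_coe_le_iff {a b : TR} (c : ℝ) :
    a + (c : TR) ≤ b + (c : TR) ↔ a ≤ b :=
  WithTop.add_le_add_iff_right (by simp)

/-- Key per-polynomial lemma. -/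
lemma inSupp_dehom (f : TPoly (Fin (n + 1) → ℕ)) (hf : (psupp f).Finite)
    (w : Fin n → ℝ) :
    inSuppN w (dehom f) =
      {u : Fin n → ℕ | ∃ k : ℕ, Fin.cons k u ∈ inSuppN (Fin.cons (0 : ℝ) w) f} := by
  ext u
  constructor
  · rintro ⟨hne, hmin⟩
    obtain ⟨k, hk, hkmin⟩ := dehom_attained f hf u
    refine ⟨k, ?_, ?_⟩
    · rw [← hk]; exact hne
    · intro v'
      rw [dot_cons_zero' w k u, dot_cons_zero w v']
      have h1 : f (Fin.cons k u) + ((dotN w u : ℝ) : TR)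
          ≤ dehom f (Fin.tail v') + ((dotN w (Fin.tail v') : ℝ) : TR) := by
        rw [← hk]; exact hmin (Fin.tail v')
      refine h1.trans (add_le_add_left ?_ _)
      obtain ⟨k', hk', hk'min⟩ := dehom_attained f hf (Fin.tail v')
      rw [hk']
      calc f (Fin.cons k' (Fin.tail v')) ≤ f (Fin.cons (v' 0) (Fin.tail v')) :=
            hk'min (v' 0)
        _ = f v' := by rw [Fin.cons_self_tail]
  · rintro ⟨k, hne, hmin⟩
    obtain ⟨k₀, hk₀, hk₀min⟩ := dehom_attained f hf u
    have heq : dehom f u = f (Fin.cons k u) := by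
      rw [hk₀]
      refine le_antisymm (hk₀min k) ?_
      have := hmin (Fin.cons k₀ u)
      rw [dot_cons_zero' w k u, dot_cons_zero' w k₀ u] at this
      exact (add_coe_le_iff (dotN w u)).mp this
    refine ⟨?_, ?_⟩
    · rw [heq]; exact hne
    · intro v
      obtain ⟨k', hk', _⟩ := dehom_attained f hf v
      rw [heq, hk']
      have := hmin (Fin.cons k' v)
      rwa [dot_cons_zero' w k u, dot_cons_zero' w k' v] at this

end DehomAux

end TropStmt

theorem initial_of_dehomogenization
    (n : ℕ) (I : Set (TropStmt.TPoly (Fin (n + 1) → ℕ)))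
    (hI : TropStmt.IsHomogTropIdeal I) (w : Fin n → ℝ) :
    {S | ∃ f ∈ I, S = TropStmt.inSuppN w (TropStmt.dehom f)} =
      {S | ∃ f ∈ I,
        S = {u : Fin n → ℕ | ∃ k : ℕ,
          Fin.cons k u ∈ TropStmt.inSuppN (Fin.cons (0 : ℝ) w) f}} := by
  have hfin := hI.1.1.1
  ext S
  simp only [Set.mem_setOf_eq]
  constructor
  · rintro ⟨f, hfI, rfl⟩
    exact ⟨f, hfI, TropStmt.inSupp_dehom f (hfin f hfI) w⟩
  · rintro ⟨f, hfI, rfl⟩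
    exact ⟨f, hfI, (TropStmt.inSupp_dehom f (hfin f hfI) w).symm⟩
end
end

section
/- Let I ⊆ ℝ̄[x₁,…,xₙ] be a tropical ideal and ≺ a monomial term order. For any finite collection E of monomials, the set E \ { in_≺(f) : f ∈ I with support contained in E } is a basis of the underlying matroid of the valuated matroid of polynomials of I with support in E. -/
open scoped Classical
open Filter

noncomputable section

namespace TropAux

open TropStmt

lemma exists_rmin {α : Type*} (r : α → α → Prop)
    (htr : ∀ u v w, r u v → r v w → r u w)
    (htot : ∀ u v, u ≠ v → r u v ∨ r v u)
    (s : Finset α) (hs : s.Nonempty) :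
    ∃ m ∈ s, ∀ w ∈ s, w ≠ m → r m w := by
  classical
  induction s using Finset.induction_on with
  | empty => exact absurd hs (by simp)
  | insert a s ha ih =>
    rcases s.eq_empty_or_nonempty with h | h
    · subst h
      exact ⟨a, by simp, by simp⟩
    · obtain ⟨m, hm, hmin⟩ := ih h
      by_cases hab : a = m
      · refine ⟨m, Finset.mem_insert_of_mem hm, fun w hw hwm => ?_⟩
        rcases Finset.mem_insert.1 hw with h1 | h1
        · exact absurd (h1.trans hab) hwm
        · exact hmin w h1 hwm
      · rcases htot a m hab with h1 | h1
        · refine ⟨a, Finset.mem_insert_self _ _, fun w hw hwa => ?_⟩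
          rcases Finset.mem_insert.1 hw with h2 | h2
          · exact absurd h2 hwa
          · by_cases hwm : w = m
            · exact hwm ▸ h1
            · exact htr _ _ _ h1 (hmin w h2 hwm)
        · refine ⟨m, Finset.mem_insert_of_mem hm, fun w hw hwm => ?_⟩
          rcases Finset.mem_insert.1 hw with h2 | h2
          · exact h2 ▸ h1
          · exact hmin w h2 hwm

variable {n : ℕ}

/-- scaling: multiplying by a finite constant shifts all coefficients -/
lemma tmulTerm_zero_apply (c : TR) (g : TPoly (Fin n → ℕ)) (w : Fin n → ℕ) :
    tmulTerm c 0 g w = c + g w := by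
  have hex : ∃ t : (Fin n → ℕ), t + 0 = w := ⟨w, add_zero w⟩
  simp only [tmulTerm, dif_pos hex]
  congr 1
  have := hex.choose_spec
  rw [add_zero] at this
  rw [this]

lemma main_aux (I : Set (TPoly (Fin n → ℕ))) (hI : IsTropIdeal I)
    (r : (Fin n → ℕ) → (Fin n → ℕ) → Prop) (hr : IsTermOrder n r)
    (E : Finset (Fin n → ℕ)) (u : Fin n → ℕ) :
    ∀ k : ℕ, ∀ S : Finset (Fin n → ℕ), S.card ≤ k →
    (∀ s ∈ S, s ∈ {u | ∃ f ∈ I, psupp f ⊆ ↑E ∧ isInitialMon r f u} ∧ s ∈ E ∧ s ≠ u) →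
    (∀ s ∈ S, ∀ w, w ∈ (E : Set (Fin n → ℕ)) →
      w ∈ {u | ∃ f ∈ I, psupp f ⊆ ↑E ∧ isInitialMon r f u} → w ≠ u → r s w → w ∈ S) →
    ∀ f ∈ I, psupp f ⊆ ↑E → isInitialMon r f u →
    (∀ w ∈ psupp f, w ∈ {u | ∃ f ∈ I, psupp f ⊆ ↑E ∧ isInitialMon r f u} → w ≠ u → w ∈ S) →
    ∃ g ∈ I, (∃ v, g v ≠ ⊤) ∧ psupp g ⊆
      insert u ((E : Set (Fin n → ℕ)) \ {u | ∃ f ∈ I, psupp f ⊆ ↑E ∧ isInitialMon r f u}) := by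
  set Bad := {u | ∃ f ∈ I, psupp f ⊆ ↑E ∧ isInitialMon r f u} with hBad
  intro k
  induction k with
  | zero =>
    intro S hcard hSmem hSclos f hf hfE hfinit hfS
    -- S is empty, so no bad monomials in supp f besides u
    refine ⟨f, hf, ⟨u, hfinit.1⟩, fun w hw => ?_⟩
    by_cases hwu : w = u
    · exact Set.mem_insert_iff.mpr (Or.inl hwu)
    · refine Set.mem_insert_of_mem _ ⟨hfE hw, fun hwB => ?_⟩
      have := hfS w hw hwB hwu
      simp [Finset.card_eq_zero.mp (Nat.le_zero.mp hcard)] at this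
  | succ k ih =>
    intro S hcard hSmem hSclos f hf hfE hfinit hfS
    have hfin : (psupp f).Finite := hI.1.1 f hf
    -- bad monomials of f other than u
    set T : Finset (Fin n → ℕ) := hfin.toFinset.filter (fun w => w ∈ Bad ∧ w ≠ u) with hT
    rcases T.eq_empty_or_nonempty with hTe | hTne
    · refine ⟨f, hf, ⟨u, hfinit.1⟩, fun w hw => ?_⟩
      by_cases hwu : w = u
      · exact Set.mem_insert_iff.mpr (Or.inl hwu)
      · refine Set.mem_insert_of_mem _ ⟨hfE hw, fun hwB => ?_⟩
        have : w ∈ T := by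
          rw [hT, Finset.mem_filter, Set.Finite.mem_toFinset]
          exact ⟨hw, hwB, hwu⟩
        simp [hTe] at this
    · obtain ⟨v, hvT, hvmin⟩ := exists_rmin r hr.trans hr.total T hTne
      rw [hT, Finset.mem_filter, Set.Finite.mem_toFinset] at hvT
      obtain ⟨hvf, hvB, hvu⟩ := hvT
      obtain ⟨g, hgI, hgE, hginit⟩ := hvB
      -- scale g so that it agrees with f at v
      obtain ⟨a, ha⟩ := Option.ne_none_iff_exists.mp hginit.1
      obtain ⟨b, hb⟩ := Option.ne_none_iff_exists.mp hvf
      set c : TR := ((b - a : ℝ) : TR) with hc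
      set g' : TPoly (Fin n → ℕ) := tmulTerm c 0 g with hg'
      have hg'I : g' ∈ I := hI.1.2.2.2 g hgI c 0
      have hg'app : ∀ w, g' w = c + g w := fun w => tmulTerm_zero_apply c g w
      have hg'supp : ∀ w, g' w = ⊤ ↔ g w = ⊤ := by
        intro w
        rw [hg'app w, WithTop.add_eq_top]
        simp [hc]
      have hg'v : g' v = f v := by
        rw [hg'app v, ← ha, ← hb]
        show ((b - a : ℝ) : TR) + (a : TR) = ((b : ℝ) : TR)
        rw [← WithTop.coe_add]
        norm_num
      have hfv : f v ≠ ⊤ := hvf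
      -- eliminate v
      obtain ⟨h, hhI, hhv, hhmin⟩ := hI.2 f hf g' hg'I v hg'v.symm hfv
      -- h's support is contained in supp f ∪ supp g'
      have hsub : ∀ w, h w ≠ ⊤ → f w ≠ ⊤ ∨ g' w ≠ ⊤ := by
        intro w hw
        by_contra hcon
        push_neg at hcon
        have : min (f w) (g' w) ≤ h w := (hhmin w).1
        rw [hcon.1, hcon.2] at this
        simp at this
        exact hw this
      -- u is not in supp g'
      have hgu : g' u = ⊤ := by
        by_contra hgu
        by_cases huv : u = v
        · exact hr.irrefl u (huv ▸ hfinit.2 v hvf hvu)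
        · exact hr.irrefl u (hr.trans u v u (hfinit.2 v hvf hvu)
            (hginit.2 u (fun ht => hgu ((hg'supp u).mpr ht)) huv))
      have hhu : h u = f u := by
        have : f u ≠ g' u := hgu ▸ hfinit.1
        rw [(hhmin u).2 this, hgu]
        exact min_eq_left le_top
      have hhune : h u ≠ ⊤ := hhu ▸ hfinit.1
      -- h is supported in E with initial monomial u
      have hhE : psupp h ⊆ ↑E := by
        intro w hw
        rcases hsub w hw with h1 | h1
        · exact hfE h1
        · exact hgE (fun ht => h1 ((hg'supp w).mpr ht))
      have hhinit : isInitialMon r h u := by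
        refine ⟨hhune, fun w hw hwu => ?_⟩
        rcases hsub w hw with h1 | h1
        · exact hfinit.2 w h1 hwu
        · have hwv : w ≠ v := fun he => hw (he ▸ hhv)
          exact hr.trans u v w (hfinit.2 v hvf hvu)
            (hginit.2 w (fun ht => h1 ((hg'supp w).mpr ht)) hwv)
      -- bad monomials of h are all r-above v
      have hv_above : ∀ w, h w ≠ ⊤ → w ∈ Bad → w ≠ u → r v w := by
        intro w hw hwB hwu
        have hwv : w ≠ v := fun he => hw (he ▸ hhv)
        rcases hsub w hw with h1 | h1
        · have hwT : w ∈ T := by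
            rw [hT, Finset.mem_filter, Set.Finite.mem_toFinset]
            exact ⟨h1, hwB, hwu⟩
          exact hvmin w hwT hwv
        · exact hginit.2 w (fun ht => h1 ((hg'supp w).mpr ht)) hwv
      -- recurse with the strictly smaller S'
      set S' : Finset (Fin n → ℕ) := S.filter (fun w => r v w) with hS'
      have hvS : v ∈ S := hfS v hvf (by exact ⟨g, hgI, hgE, hginit⟩) hvu
      have hvS' : v ∉ S' := by
        rw [hS', Finset.mem_filter]
        exact fun hv => hr.irrefl v hv.2
      have hcard' : S'.card ≤ k := by
        have hss : S' ⊂ S := Finset.ssubset_iff_of_subset (Finset.filter_subset _ _)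
          |>.mpr ⟨v, hvS, hvS'⟩
        have := Finset.card_lt_card hss
        omega
      refine ih S' hcard' (fun s hs => hSmem s (Finset.filter_subset _ _ hs)) ?_ h hhI hhE hhinit ?_
      · intro s hs w hwE hwB hwu hsw
        rw [hS', Finset.mem_filter] at hs ⊢
        exact ⟨hSclos s hs.1 w hwE hwB hwu hsw, hr.trans v s w hs.2 hsw⟩
      · intro w hw hwB hwu
        rw [hS', Finset.mem_filter]
        have hrv : r v w := hv_above w hw hwB hwu
        refine ⟨?_, hrv⟩
        rcases hsub w hw with h1 | h1
        · exact hfS w h1 hwB hwu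
        · exact hSclos v hvS w (hgE (fun ht => h1 ((hg'supp w).mpr ht))) hwB hwu hrv

end TropAux

theorem standard_monomials_form_basis
    (n : ℕ) (I : Set (TropStmt.TPoly (Fin n → ℕ))) (hI : TropStmt.IsTropIdeal I)
    (r : (Fin n → ℕ) → (Fin n → ℕ) → Prop) (hr : TropStmt.IsTermOrder n r)
    (E : Finset (Fin n → ℕ)) :
    (∀ f ∈ I, TropStmt.psupp f ⊆
        ((E : Set (Fin n → ℕ)) \ {u | ∃ f ∈ I, TropStmt.psupp f ⊆ ↑E ∧ TropStmt.isInitialMon r f u}) →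
      ∀ u, f u = ⊤) ∧
    ∀ u ∈ (E : Set (Fin n → ℕ)) ∩ {u | ∃ f ∈ I, TropStmt.psupp f ⊆ ↑E ∧ TropStmt.isInitialMon r f u},
      ∃ f ∈ I, (∃ v, f v ≠ ⊤) ∧ TropStmt.psupp f ⊆
        insert u ((E : Set (Fin n → ℕ)) \ {u | ∃ f ∈ I, TropStmt.psupp f ⊆ ↑E ∧ TropStmt.isInitialMon r f u}) := by
  
  classical
  constructor
  · intro f hf hsupp
    by_contra hcon
    push_neg at hcon
    obtain ⟨u0, hu0⟩ := hcon
    have hfin := hI.1.1 f hf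
    have hne : hfin.toFinset.Nonempty := ⟨u0, by rwa [Set.Finite.mem_toFinset]⟩
    obtain ⟨m, hm, hmin⟩ := TropAux.exists_rmin r hr.trans hr.total hfin.toFinset hne
    rw [Set.Finite.mem_toFinset] at hm
    have hinit : TropStmt.isInitialMon r f m :=
      ⟨hm, fun v hv hvm => hmin v (by rwa [Set.Finite.mem_toFinset]) hvm⟩
    have hmB : m ∈ {u | ∃ f ∈ I, TropStmt.psupp f ⊆ ↑E ∧ TropStmt.isInitialMon r f u} :=
      ⟨f, hf, hsupp.trans Set.diff_subset, hinit⟩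
    exact (hsupp hm).2 hmB
  · intro u hu
    obtain ⟨huE, g, hgI, hgE, hginit⟩ := hu
    set Bad := {u | ∃ f ∈ I, TropStmt.psupp f ⊆ ↑E ∧ TropStmt.isInitialMon r f u} with hBad
    set S0 : Finset (Fin n → ℕ) := E.filter (fun w => w ∈ Bad ∧ w ≠ u) with hS0
    refine TropAux.main_aux I hI r hr E u S0.card S0 le_rfl ?_ ?_ g hgI hgE hginit ?_
    · intro s hs
      rw [hS0, Finset.mem_filter] at hs
      exact ⟨hs.2.1, hs.1, hs.2.2⟩
    · intro s hs w hwE hwB hwu hsw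
      rw [hS0, Finset.mem_filter]
      exact ⟨hwE, hwB, hwu⟩
    · intro w hw hwB hwu
      rw [hS0, Finset.mem_filter]
      exact ⟨hgE hw, hwB, hwu⟩
end
end
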